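/- (Noise term bound.) Let U, Û ∈ ℝ^{n×d} be orthonormal matrices and W ∈ ℝ^{n×T}. Suppose ‖P_U^⊥ W‖_F ≤ δ for some δ ≥ 0 and ‖W^⊤ U U^⊤ x‖₂ ≤ σ̄ ‖x‖₂ for all x ∈ ℝⁿ for some σ̄ ≥ 0. Let N := 2 P_Û^⊥ (P_U^⊥ W W^⊤ P_U^⊥ + P_U^⊥ W W^⊤ P_U + P_U W W^⊤ P_U^⊥) Û. Then ‖N‖_F ≤ 2δ² + 4σ̄δ. -/

import Mathlib

open Matrix

/-- Euclidean norm of a vector. -/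
noncomputable def enorm2 {n : ℕ} (v : Fin n → ℝ) : ℝ :=
  Real.sqrt (∑ i, (v i) ^ 2)

/-- Frobenius norm of a matrix. -/
noncomputable def frob {n m : ℕ} (A : Matrix (Fin n) (Fin m) ℝ) : ℝ :=
  Real.sqrt (Matrix.trace (Aᵀ * A))

attribute [local instance] Matrix.frobeniusSeminormedAddCommGroup Matrix.frobeniusNormedSpace

lemma enorm_nonneg {n : ℕ} (v : Fin n → ℝ) : 0 ≤ enorm2 v := Real.sqrt_nonneg _

lemma enorm_sq {n : ℕ} (v : Fin n → ℝ) : enorm2 v ^ 2 = ∑ i, v i ^ 2 :=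
  Real.sq_sqrt (Finset.sum_nonneg fun _ _ => sq_nonneg _)

lemma dot_le {n : ℕ} (v w : Fin n → ℝ) : v ⬝ᵥ w ≤ enorm2 v * enorm2 w := by
  simpa [dotProduct, enorm2] using
    Real.sum_mul_le_sqrt_mul_sqrt Finset.univ v w

lemma enorm_sq_eq_dot {n : ℕ} (v : Fin n → ℝ) : enorm2 v ^ 2 = v ⬝ᵥ v := by
  rw [enorm_sq]; simp [dotProduct, sq]

lemma frob_eq_norm {n m : ℕ} (A : Matrix (Fin n) (Fin m) ℝ) : frob A = ‖A‖ := by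
  rw [frob, Matrix.frobenius_norm_def, ← Real.sqrt_eq_rpow]
  congr 1
  rw [Matrix.trace]
  simp only [Matrix.diag, Matrix.mul_apply, Matrix.transpose_apply, Real.norm_eq_abs, sq_abs]
  rw [Finset.sum_comm]
  simp [sq]

lemma le_of_sq_le {a c : ℝ} (ha : 0 ≤ a) (hc : 0 ≤ c) (h : a ^ 2 ≤ c * a) : a ≤ c := by
  rcases eq_or_lt_of_le ha with h0 | h0
  · rw [← h0]; exact hc
  · rw [sq] at h; exact le_of_mul_le_mul_right h h0

lemma adj_dot {a b : ℕ} (A : Matrix (Fin a) (Fin b) ℝ) (x : Fin a → ℝ) (y : Fin b → ℝ) :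
    (Aᵀ.mulVec x) ⬝ᵥ y = x ⬝ᵥ (A.mulVec y) := by
  rw [Matrix.dotProduct_mulVec, Matrix.mulVec_transpose]

lemma isometry_enorm {a b : ℕ} (A : Matrix (Fin a) (Fin b) ℝ) (hA : Aᵀ * A = 1)
    (u : Fin b → ℝ) : enorm2 (A.mulVec u) = enorm2 u := by
  have h1 : enorm2 (A.mulVec u) ^ 2 = enorm2 u ^ 2 := by
    rw [enorm_sq_eq_dot, enorm_sq_eq_dot, Matrix.dotProduct_mulVec, ← Matrix.mulVec_transpose,
      Matrix.mulVec_mulVec, hA, Matrix.one_mulVec]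
  calc enorm2 (A.mulVec u) = Real.sqrt (enorm2 (A.mulVec u) ^ 2) :=
        (Real.sqrt_sq (enorm_nonneg _)).symm
    _ = Real.sqrt (enorm2 u ^ 2) := by rw [h1]
    _ = enorm2 u := Real.sqrt_sq (enorm_nonneg _)

lemma transpose_isometry_enorm {a b : ℕ} (A : Matrix (Fin a) (Fin b) ℝ) (hA : Aᵀ * A = 1)
    (v : Fin a → ℝ) : enorm2 (Aᵀ.mulVec v) ≤ enorm2 v := by
  refine le_of_sq_le (enorm_nonneg _) (enorm_nonneg _) ?_
  calc enorm2 (Aᵀ.mulVec v) ^ 2 = (Aᵀ.mulVec v) ⬝ᵥ (Aᵀ.mulVec v) := enorm_sq_eq_dot _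
    _ = v ⬝ᵥ (A.mulVec (Aᵀ.mulVec v)) := adj_dot A v _
    _ ≤ enorm2 v * enorm2 (A.mulVec (Aᵀ.mulVec v)) := dot_le _ _
    _ = enorm2 v * enorm2 (Aᵀ.mulVec v) := by rw [isometry_enorm A hA]

lemma proj_enorm {a : ℕ} (Q : Matrix (Fin a) (Fin a) ℝ) (hQs : Qᵀ = Q) (hQi : Q * Q = Q)
    (v : Fin a → ℝ) : enorm2 (Q.mulVec v) ≤ enorm2 v := by
  refine le_of_sq_le (enorm_nonneg _) (enorm_nonneg _) ?_
  have key : (Q.mulVec v) ⬝ᵥ (Q.mulVec v) = (Q.mulVec v) ⬝ᵥ v := by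
    rw [Matrix.dotProduct_mulVec, ← Matrix.mulVec_transpose, Matrix.mulVec_mulVec, hQs, hQi]
  calc enorm2 (Q.mulVec v) ^ 2 = (Q.mulVec v) ⬝ᵥ (Q.mulVec v) := enorm_sq_eq_dot _
    _ = (Q.mulVec v) ⬝ᵥ v := key
    _ ≤ enorm2 (Q.mulVec v) * enorm2 v := dot_le _ _
    _ = enorm2 v * enorm2 (Q.mulVec v) := mul_comm _ _

lemma op_transpose {a b : ℕ} (A : Matrix (Fin a) (Fin b) ℝ) (σ : ℝ) (hσ : 0 ≤ σ)
    (h : ∀ x, enorm2 (A.mulVec x) ≤ σ * enorm2 x) (y : Fin a → ℝ) :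
    enorm2 (Aᵀ.mulVec y) ≤ σ * enorm2 y := by
  refine le_of_sq_le (enorm_nonneg _) (mul_nonneg hσ (enorm_nonneg _)) ?_
  calc enorm2 (Aᵀ.mulVec y) ^ 2 = (Aᵀ.mulVec y) ⬝ᵥ (Aᵀ.mulVec y) := enorm_sq_eq_dot _
    _ = y ⬝ᵥ (A.mulVec (Aᵀ.mulVec y)) := by rw [adj_dot]
    _ ≤ enorm2 y * enorm2 (A.mulVec (Aᵀ.mulVec y)) := dot_le _ _
    _ ≤ enorm2 y * (σ * enorm2 (Aᵀ.mulVec y)) := by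
        exact mul_le_mul_of_nonneg_left (h _) (enorm_nonneg _)
    _ = σ * enorm2 y * enorm2 (Aᵀ.mulVec y) := by ring

lemma norm_eq_sqrt_rows {a b : ℕ} (M : Matrix (Fin a) (Fin b) ℝ) :
    ‖M‖ = Real.sqrt (∑ i, enorm2 (M i) ^ 2) := by
  rw [Matrix.frobenius_norm_def, ← Real.sqrt_eq_rpow]
  congr 1
  refine Finset.sum_congr rfl fun i _ => ?_
  rw [enorm_sq]
  simp [sq_abs]

lemma norm_mul_right {a b c : ℕ} (X : Matrix (Fin a) (Fin b) ℝ) (Y : Matrix (Fin b) (Fin c) ℝ)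
    (σ : ℝ) (hσ : 0 ≤ σ) (hY : ∀ v, enorm2 (Yᵀ.mulVec v) ≤ σ * enorm2 v) :
    ‖X * Y‖ ≤ σ * ‖X‖ := by
  rw [norm_eq_sqrt_rows, norm_eq_sqrt_rows]
  have hrow : ∀ i, (X * Y) i = Yᵀ.mulVec (X i) := by
    intro i; funext j
    simp [Matrix.mul_apply, Matrix.mulVec, dotProduct, mul_comm]
  calc Real.sqrt (∑ i, enorm2 ((X * Y) i) ^ 2)
      ≤ Real.sqrt (∑ i, (σ * enorm2 (X i)) ^ 2) := by
        apply Real.sqrt_le_sqrt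
        refine Finset.sum_le_sum fun i _ => ?_
        rw [hrow]
        exact pow_le_pow_left₀ (enorm_nonneg _) (hY _) 2
    _ = σ * Real.sqrt (∑ i, enorm2 (X i) ^ 2) := by
        simp_rw [mul_pow, ← Finset.mul_sum]
        rw [Real.sqrt_mul (sq_nonneg _), Real.sqrt_sq hσ]

lemma norm_mul_left {a b c : ℕ} (A : Matrix (Fin a) (Fin b) ℝ) (X : Matrix (Fin b) (Fin c) ℝ)
    (σ : ℝ) (hσ : 0 ≤ σ) (hA : ∀ v, enorm2 (A.mulVec v) ≤ σ * enorm2 v) :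
    ‖A * X‖ ≤ σ * ‖X‖ := by
  rw [← Matrix.frobenius_norm_transpose, Matrix.transpose_mul, ← Matrix.frobenius_norm_transpose X]
  exact norm_mul_right Xᵀ Aᵀ σ hσ (by simpa using hA)
set_option maxHeartbeats 1000000 in
theorem stmt10 {n d T : ℕ} (U Uhat : Matrix (Fin n) (Fin d) ℝ)
    (hU : Uᵀ * U = 1) (hUhat : Uhatᵀ * Uhat = 1)
    (W : Matrix (Fin n) (Fin T) ℝ)
    (δ : ℝ) (hδ : 0 ≤ δ) (hnoise : frob ((1 - U * Uᵀ) * W) ≤ δ)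
    (σmax : ℝ) (hσ : 0 ≤ σmax)
    (hsv : ∀ x : Fin n → ℝ, enorm2 (Wᵀ.mulVec ((U * Uᵀ).mulVec x)) ≤ σmax * enorm2 x)
    (N : Matrix (Fin n) (Fin d) ℝ)
    (hN : N = (2 : ℝ) • ((1 - Uhat * Uhatᵀ) *
      ((1 - U * Uᵀ) * W * Wᵀ * (1 - U * Uᵀ) + (1 - U * Uᵀ) * W * Wᵀ * (U * Uᵀ)
        + (U * Uᵀ) * W * Wᵀ * (1 - U * Uᵀ)) * Uhat)) :
    frob N ≤ 2 * δ ^ 2 + 4 * σmax * δ := by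
  set P : Matrix (Fin n) (Fin n) ℝ := U * Uᵀ with hP
  set Pp : Matrix (Fin n) (Fin n) ℝ := 1 - P with hPp
  set Q : Matrix (Fin n) (Fin n) ℝ := 1 - Uhat * Uhatᵀ with hQ
  have hPs : Pᵀ = P := by rw [hP, Matrix.transpose_mul, Matrix.transpose_transpose]
  have hPps : Ppᵀ = Pp := by rw [hPp, Matrix.transpose_sub, Matrix.transpose_one, hPs]
  have hQs : Qᵀ = Q := by
    rw [hQ, Matrix.transpose_sub, Matrix.transpose_one, Matrix.transpose_mul,
      Matrix.transpose_transpose]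
  have hQi : Q * Q = Q := by
    have h1 : (Uhat * Uhatᵀ) * (Uhat * Uhatᵀ) = Uhat * Uhatᵀ := by
      rw [Matrix.mul_assoc, ← Matrix.mul_assoc Uhatᵀ, hUhat, Matrix.one_mul]
    rw [hQ, Matrix.sub_mul, Matrix.mul_sub, Matrix.mul_sub, h1]
    simp only [Matrix.one_mul, Matrix.mul_one]
    abel
  -- norm of Pp * W
  have hXn : ‖Pp * W‖ ≤ δ := by rw [← frob_eq_norm]; exact hnoise
  -- bound on Wᵀ * P as an operator
  have hZ : ∀ x, enorm2 ((Wᵀ * P).mulVec x) ≤ σmax * enorm2 x := by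
    intro x; rw [← Matrix.mulVec_mulVec]; exact hsv x
  have hZt : ∀ v, enorm2 ((Wᵀ * P)ᵀ.mulVec v) ≤ σmax * enorm2 v :=
    op_transpose (Wᵀ * P) σmax hσ hZ
  -- the three pieces
  have hA1 : ‖Pp * W * Wᵀ * Pp‖ ≤ δ ^ 2 := by
    have e1 : Pp * W * Wᵀ * Pp = (Pp * W) * (Pp * W)ᵀ := by
      simp only [Matrix.transpose_mul, Matrix.transpose_transpose, hPps, Matrix.mul_assoc]
    rw [e1]
    calc ‖(Pp * W) * (Pp * W)ᵀ‖ ≤ ‖Pp * W‖ * ‖(Pp * W)ᵀ‖ := Matrix.frobenius_norm_mul _ _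
      _ = ‖Pp * W‖ * ‖Pp * W‖ := by rw [Matrix.frobenius_norm_transpose]
      _ ≤ δ * δ := mul_le_mul hXn hXn (norm_nonneg _) hδ
      _ = δ ^ 2 := (sq δ).symm
  have hA2 : ‖Pp * W * Wᵀ * P‖ ≤ σmax * δ := by
    have e2 : Pp * W * Wᵀ * P = (Pp * W) * (Wᵀ * P) := by
      simp only [Matrix.mul_assoc]
    rw [e2]
    calc ‖(Pp * W) * (Wᵀ * P)‖ ≤ σmax * ‖Pp * W‖ :=
        norm_mul_right (Pp * W) (Wᵀ * P) σmax hσ hZt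
      _ ≤ σmax * δ := mul_le_mul_of_nonneg_left hXn hσ
  have hA3 : ‖P * W * Wᵀ * Pp‖ ≤ σmax * δ := by
    have e3 : P * W * Wᵀ * Pp = ((Pp * W) * (Wᵀ * P))ᵀ := by
      simp only [Matrix.transpose_mul, Matrix.transpose_transpose, hPs, hPps, Matrix.mul_assoc]
    rw [e3, Matrix.frobenius_norm_transpose]
    simpa only [Matrix.mul_assoc] using hA2
  set S := Pp * W * Wᵀ * Pp + Pp * W * Wᵀ * P + P * W * Wᵀ * Pp with hS
  have hSn : ‖S‖ ≤ δ ^ 2 + 2 * (σmax * δ) := by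
    calc ‖S‖ ≤ ‖Pp * W * Wᵀ * Pp + Pp * W * Wᵀ * P‖ + ‖P * W * Wᵀ * Pp‖ := norm_add_le _ _
      _ ≤ ‖Pp * W * Wᵀ * Pp‖ + ‖Pp * W * Wᵀ * P‖ + ‖P * W * Wᵀ * Pp‖ :=
          add_le_add (norm_add_le _ _) le_rfl
      _ ≤ δ ^ 2 + σmax * δ + σmax * δ := add_le_add (add_le_add hA1 hA2) hA3
      _ = δ ^ 2 + 2 * (σmax * δ) := by ring
  have hQop : ∀ v, enorm2 (Q.mulVec v) ≤ 1 * enorm2 v := by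
    intro v; rw [one_mul]; exact proj_enorm Q hQs hQi v
  have hUop : ∀ v, enorm2 (Uhatᵀ.mulVec v) ≤ 1 * enorm2 v := by
    intro v; rw [one_mul]; exact transpose_isometry_enorm Uhat hUhat v
  have hSU : ‖S * Uhat‖ ≤ ‖S‖ := by
    have h := norm_mul_right S Uhat 1 zero_le_one hUop
    linarith
  have hQSU : ‖Q * (S * Uhat)‖ ≤ ‖S * Uhat‖ := by
    have h := norm_mul_left Q (S * Uhat) 1 zero_le_one hQop
    linarith
  have hMn : ‖Q * S * Uhat‖ ≤ δ ^ 2 + 2 * (σmax * δ) := by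
    rw [Matrix.mul_assoc]
    exact le_trans hQSU (le_trans hSU hSn)
  rw [frob_eq_norm, hN, norm_smul]
  simp only [Real.norm_ofNat]
  calc (2 : ℝ) * ‖Q * S * Uhat‖ ≤ 2 * (δ ^ 2 + 2 * (σmax * δ)) :=
        mul_le_mul_of_nonneg_left hMn (by norm_num)
    _ = 2 * δ ^ 2 + 4 * σmax * δ := by ring
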